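/- If Y is a Poisson random variable with mean μ > 0, then ‖Y − μ‖_{ψ₁} ≤ (1 + 2/(e·log 2))·(1 + μ/log 2). If Y is a Bernoulli random variable with success probability q ∈ [0,1], then ‖Y − q‖_{ψ₁} ≤ (1 + 2/(e·log 2))·(1 + q·(1−q)/log 2). -/

import Mathlib

open MeasureTheory ProbabilityTheory Real ENNReal NNReal

lemma poisson_hasSum (r : ℝ≥0) (t : ℝ) :
    HasSum (fun k : ℕ => poissonPMFReal r k * Real.exp (t * k))
      (Real.exp ((r : ℝ) * (Real.exp t - 1))) := by
  have h := (NormedSpace.expSeries_div_hasSum_exp ((r : ℝ) * Real.exp t)).mul_left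
      (Real.exp (-(r : ℝ)))
  rw [← Real.exp_eq_exp_ℝ] at h
  have heq : (fun k : ℕ => Real.exp (-(r : ℝ)) * (((r : ℝ) * Real.exp t) ^ k / k.factorial))
      = fun k : ℕ => poissonPMFReal r k * Real.exp (t * k) := by
    funext k
    unfold poissonPMFReal
    rw [mul_comm t (k : ℝ), Real.exp_nat_mul, mul_pow]
    ring
  rw [heq, ← Real.exp_add] at h
  convert h using 2
  · rfl
  ring

lemma poisson_lintegral_exp (r : ℝ≥0) (t : ℝ) :
    ∫⁻ k, ENNReal.ofReal (Real.exp (t * k)) ∂(poissonMeasure r)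
      = ENNReal.ofReal (Real.exp ((r : ℝ) * (Real.exp t - 1))) := by
  rw [lintegral_countable']
  have hsingle : ∀ k : ℕ, ENNReal.ofReal (Real.exp (t * k)) * poissonMeasure r {k}
      = ENNReal.ofReal (poissonPMFReal r k * Real.exp (t * k)) := by
    intro k
    have : poissonMeasure r {k} = ENNReal.ofReal (poissonPMFReal r k) := by
      rw [poissonMeasure_singleton]
      rfl
    rw [this, ← ENNReal.ofReal_mul (Real.exp_pos _).le, mul_comm]
  simp_rw [hsingle]
  rw [← ENNReal.ofReal_tsum_of_nonneg
      (fun k => mul_nonneg poissonPMFReal_nonneg (Real.exp_pos _).le)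
      (poisson_hasSum r t).summable, (poisson_hasSum r t).tsum_eq]

lemma exp_le_of_small {X : ℝ} (h1 : X ≤ 1/8) : Real.exp X ≤ 8/7 := by
  have h2 : 1 - X ≤ Real.exp (-X) := by
    have := Real.add_one_le_exp (-X); linarith
  have h3 : (0:ℝ) < 1 - X := by linarith
  have h4 : Real.exp X = (Real.exp (-X))⁻¹ := by
    rw [Real.exp_neg, inv_inv]
  rw [h4]
  calc (Real.exp (-X))⁻¹ ≤ (1-X)⁻¹ := inv_anti₀ h3 h2
    _ ≤ (7/8:ℝ)⁻¹ := inv_anti₀ (by norm_num) (by linarith)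
    _ = 8/7 := by norm_num

lemma scalar_key {a m : ℝ} (hm : 0 < m) (ha : 0 < a) (ha1 : a ≤ 1/2)
    (ham : a * m ≤ 7/20) (hma2 : m * a^2 ≤ 1/6) :
    Real.exp (m * (Real.exp a - 1 - a)) + Real.exp (m * (Real.exp (-a) - 1 + a))
      ≤ 2 + Real.exp (m * (Real.exp (-a) - 1 - a)) := by
  have habs : |a| ≤ 1 := by rw [abs_of_nonneg ha.le]; linarith
  have habs' : |(-a)| ≤ 1 := by rw [abs_neg]; exact habs
  have hb1 : Real.exp a - 1 - a ≤ (3/4) * a^2 := by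
    have h := Real.exp_bound habs (n := 2) (by norm_num)
    simp only [Finset.sum_range_succ, Finset.sum_range_zero] at h
    have h2 := abs_le.mp h
    rw [abs_of_nonneg ha.le] at h2
    norm_num at h2
    nlinarith [h2.2]
  have hb2 : Real.exp (-a) - 1 + a ≤ (3/4) * a^2 := by
    have h := Real.exp_bound habs' (n := 2) (by norm_num)
    simp only [Finset.sum_range_succ, Finset.sum_range_zero] at h
    have h2 := abs_le.mp h
    rw [abs_neg, abs_of_nonneg ha.le] at h2
    norm_num at h2
    nlinarith [h2.2]
  have hX1 : m * (Real.exp a - 1 - a) ≤ 1/8 := by nlinarith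
  have hX2 : m * (Real.exp (-a) - 1 + a) ≤ 1/8 := by nlinarith
  have hE1 := exp_le_of_small hX1
  have hE2 := exp_le_of_small hX2
  have hX3 : (-1 : ℝ) ≤ m * (Real.exp (-a) - 1 - a) := by
    have := Real.add_one_le_exp (-a)
    nlinarith
  have hE3 : (2/7 : ℝ) ≤ Real.exp (m * (Real.exp (-a) - 1 - a)) := by
    have h1 : Real.exp (-1 : ℝ) ≤ Real.exp (m * (Real.exp (-a) - 1 - a)) :=
      Real.exp_le_exp.mpr hX3
    have h2 : (2/7 : ℝ) ≤ Real.exp (-1 : ℝ) := by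
      rw [Real.exp_neg]
      have := Real.exp_one_lt_d9
      have hpos := Real.exp_pos 1
      rw [le_inv_comm₀ (by norm_num : (0:ℝ) < 2/7) hpos]
      linarith
    linarith
  linarith

/-- The `ψ₁` (sub-exponential) Orlicz norm `‖Z‖_{ψ₁} = inf {K > 0 : E[exp(|Z|/K) − 1] ≤ 1}`,
valued in `ℝ≥0∞` so that `inf ∅ = ∞`. -/
noncomputable def psi1Norm {Ω : Type*} [MeasurableSpace Ω] (μ : Measure Ω) (Z : Ω → ℝ) :
    ℝ≥0∞ :=
  sInf {K : ℝ≥0∞ | 0 < K ∧ K ≠ ⊤ ∧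
    ∫⁻ ω, ENNReal.ofReal (Real.exp (|Z ω| / K.toReal) - 1) ∂μ ≤ 1}

set_option maxHeartbeats 1000000 in
/-- ψ₁-Orlicz norm bounds for centered Poisson and Bernoulli variables. -/
theorem stmt_9 {Ω : Type*} [MeasurableSpace Ω] (μ : Measure Ω) [IsProbabilityMeasure μ] :
    (∀ m : ℝ, 0 < m → ∀ Y : Ω → ℕ, Measurable Y →
      μ.map Y = poissonMeasure m.toNNReal →
      psi1Norm μ (fun ω => (Y ω : ℝ) - m)
        ≤ ENNReal.ofReal ((1 + 2 / (Real.exp 1 * Real.log 2)) * (1 + m / Real.log 2))) ∧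
    (∀ q : ℝ, 0 ≤ q → q ≤ 1 → ∀ Y : Ω → Bool, Measurable Y →
      μ {ω | Y ω = true} = ENNReal.ofReal q →
      psi1Norm μ (fun ω => (if Y ω then (1 : ℝ) else 0) - q)
        ≤ ENNReal.ofReal
            ((1 + 2 / (Real.exp 1 * Real.log 2)) * (1 + q * (1 - q) / Real.log 2))) := by
  have hlogpos : 0 < Real.log 2 := Real.log_pos (by norm_num)
  have hloglt : Real.log 2 < 0.6932 := by
    have := Real.log_two_lt_d9; linarith
  have hloggt : 0.6931 < Real.log 2 := by
    have := Real.log_two_gt_d9; linarith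
  have helt : Real.exp 1 < 2.7183 := by
    have := Real.exp_one_lt_d9; linarith
  have hepos : 0 < Real.exp 1 := Real.exp_pos 1
  have hd : 0 < Real.exp 1 * Real.log 2 := mul_pos hepos hlogpos
  set c : ℝ := 1 + 2 / (Real.exp 1 * Real.log 2) with hc_def
  have hcge : 2.06 ≤ c := by
    have h1 : Real.exp 1 * Real.log 2 ≤ 1.885 := by nlinarith
    have h2 : (1.06 : ℝ) ≤ 2 / (Real.exp 1 * Real.log 2) := by
      rw [le_div_iff₀ hd]; nlinarith
    rw [hc_def]; linarith
  have hcL : c * Real.log 2 = Real.log 2 + 2 / Real.exp 1 := by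
    rw [hc_def]; field_simp
  clear_value c
  have hcpos : 0 < c := by linarith
  constructor
  · -- Poisson case
    intro m hm Y hY hmap
    set B : ℝ := c * (1 + m / Real.log 2) with hB_def
    have hBL : B * Real.log 2 = c * Real.log 2 + c * m := by
      rw [hB_def]; field_simp
    clear_value B
    have hBgec : c ≤ B := by
      have h1 : 0 ≤ c * m := mul_nonneg hcpos.le hm.le
      have h2 : c * Real.log 2 ≤ B * Real.log 2 := by rw [hBL]; linarith
      exact le_of_mul_le_mul_right h2 hlogpos
    have hBpos : 0 < B := by linarith
    have hBne : B ≠ 0 := ne_of_gt hBpos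
    have hainv : 0 < B⁻¹ := inv_pos.mpr hBpos
    have haB : B⁻¹ ≤ 0.486 := by
      calc B⁻¹ ≤ (2.06 : ℝ)⁻¹ := inv_anti₀ (by norm_num) (by linarith)
        _ ≤ 0.486 := by norm_num
    have ha1 : B⁻¹ ≤ 1/2 := by linarith
    have ham : B⁻¹ * m ≤ 0.3366 := by
      rw [inv_mul_eq_div, div_le_iff₀ hBpos]
      have hcm : 2.06 * m ≤ c * m := mul_le_mul_of_nonneg_right hcge hm.le
      have hLm : Real.log 2 * m ≤ 0.6932 * m := mul_le_mul_of_nonneg_right hloglt.le hm.le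
      have hcLpos : 0 < c * Real.log 2 := mul_pos hcpos hlogpos
      have h5 : m * Real.log 2 ≤ 0.3366 * (B * Real.log 2) := by
        rw [hBL]; nlinarith
      have h6 : m * Real.log 2 ≤ (0.3366 * B) * Real.log 2 := by
        rw [mul_assoc]; exact h5
      exact le_of_mul_le_mul_right h6 hlogpos
    have ham' : B⁻¹ * m ≤ 7/20 := by linarith
    have hma2 : m * (B⁻¹)^2 ≤ 1/6 := by
      have h := mul_le_mul ham haB hainv.le (by norm_num : (0:ℝ) ≤ 0.3366)
      nlinarith
    have hL : ∀ t : ℝ, ∫⁻ ω, ENNReal.ofReal (Real.exp (t * (Y ω : ℝ))) ∂μ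
        = ENNReal.ofReal (Real.exp (m * (Real.exp t - 1))) := by
      intro t
      calc ∫⁻ ω, ENNReal.ofReal (Real.exp (t * (Y ω : ℝ))) ∂μ
          = ∫⁻ k, ENNReal.ofReal (Real.exp (t * (k : ℝ))) ∂(μ.map Y) :=
            (lintegral_map (f := fun k : ℕ => ENNReal.ofReal (Real.exp (t * (k : ℝ))))
              measurable_from_nat hY).symm
        _ = ENNReal.ofReal (Real.exp (m * (Real.exp t - 1))) := by
            rw [hmap, poisson_lintegral_exp, Real.coe_toNNReal m hm.le]
    unfold psi1Norm
    apply sInf_le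
    refine ⟨ENNReal.ofReal_pos.mpr hBpos, ENNReal.ofReal_ne_top, ?_⟩
    simp only [ENNReal.toReal_ofReal hBpos.le]
    show ∫⁻ ω, ENNReal.ofReal (Real.exp (|(Y ω : ℝ) - m| / B) - 1) ∂μ ≤ 1
    have hGmeas : Measurable fun ω =>
        ENNReal.ofReal (1 + Real.exp (-(m/B)) * Real.exp (-B⁻¹ * (Y ω : ℝ))) :=
      (measurable_from_nat (f := fun k : ℕ =>
        ENNReal.ofReal (1 + Real.exp (-(m/B)) * Real.exp (-B⁻¹ * (k : ℝ))))).comp hY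
    have hmeas2 : Measurable fun ω => ENNReal.ofReal (Real.exp (-B⁻¹ * (Y ω : ℝ))) :=
      (measurable_from_nat (f := fun k : ℕ =>
        ENNReal.ofReal (Real.exp (-B⁻¹ * (k : ℝ))))).comp hY
    have hmeas1 : Measurable fun ω => ENNReal.ofReal (Real.exp (B⁻¹ * (Y ω : ℝ))) :=
      (measurable_from_nat (f := fun k : ℕ =>
        ENNReal.ofReal (Real.exp (B⁻¹ * (k : ℝ))))).comp hY
    have key : (∫⁻ ω, ENNReal.ofReal (Real.exp (|(Y ω : ℝ) - m| / B) - 1) ∂μ)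
        + ∫⁻ ω, ENNReal.ofReal (1 + Real.exp (-(m/B)) * Real.exp (-B⁻¹ * (Y ω : ℝ))) ∂μ
        ≤ ∫⁻ ω, ENNReal.ofReal (Real.exp (-(m/B)) * Real.exp (B⁻¹ * (Y ω : ℝ))
            + Real.exp (m/B) * Real.exp (-B⁻¹ * (Y ω : ℝ))) ∂μ := by
      rw [← lintegral_add_right _ hGmeas]
      apply lintegral_mono
      intro ω
      set y : ℝ := (Y ω : ℝ) with hy_def
      have hy : 0 ≤ y := Nat.cast_nonneg _
      have e1 : Real.exp (-(m/B)) * Real.exp (B⁻¹ * y) = Real.exp ((y - m)/B) := by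
        rw [← Real.exp_add]; congr 1; field_simp; ring
      have e2 : Real.exp (m/B) * Real.exp (-B⁻¹ * y) = Real.exp ((m - y)/B) := by
        rw [← Real.exp_add]; congr 1; field_simp; ring
      have e3 : Real.exp (-(m/B)) * Real.exp (-B⁻¹ * y) = Real.exp (-((y + m)/B)) := by
        rw [← Real.exp_add]; congr 1; field_simp; ring
      have hkey : Real.exp (|y - m| / B) + Real.exp (-((y + m)/B))
          ≤ Real.exp ((y - m)/B) + Real.exp ((m - y)/B) := by
        rcases abs_cases (y - m) with ⟨h, _⟩ | ⟨h, _⟩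
        · rw [h]
          have h2 : Real.exp (-((y + m)/B)) ≤ Real.exp ((m - y)/B) := by
            apply Real.exp_le_exp.mpr
            rw [show -((y + m)/B) = (-(y + m))/B by ring]
            apply div_le_div_of_nonneg_right ?_ hBpos.le
            · linarith
          linarith
        · rw [h, show -(y - m)/B = (m - y)/B by ring]
          have h2 : Real.exp (-((y + m)/B)) ≤ Real.exp ((y - m)/B) := by
            apply Real.exp_le_exp.mpr
            rw [show -((y + m)/B) = (-(y + m))/B by ring]
            apply div_le_div_of_nonneg_right ?_ hBpos.le
            · linarith
          linarith
      have hnn1 : 0 ≤ Real.exp (|y - m| / B) - 1 := by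
        have h0 : 0 ≤ |y - m| / B := div_nonneg (abs_nonneg _) hBpos.le
        have := Real.add_one_le_exp (|y - m| / B)
        linarith
      have hnn2 : 0 ≤ 1 + Real.exp (-(m/B)) * Real.exp (-B⁻¹ * y) := by positivity
      calc ENNReal.ofReal (Real.exp (|y - m| / B) - 1)
            + ENNReal.ofReal (1 + Real.exp (-(m/B)) * Real.exp (-B⁻¹ * y))
          = ENNReal.ofReal ((Real.exp (|y - m| / B) - 1)
              + (1 + Real.exp (-(m/B)) * Real.exp (-B⁻¹ * y))) :=
            (ENNReal.ofReal_add hnn1 hnn2).symm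
        _ ≤ ENNReal.ofReal (Real.exp (-(m/B)) * Real.exp (B⁻¹ * y)
              + Real.exp (m/B) * Real.exp (-B⁻¹ * y)) := by
            apply ENNReal.ofReal_le_ofReal
            rw [e1, e2, e3]
            linarith
    have hG : ∫⁻ ω, ENNReal.ofReal (1 + Real.exp (-(m/B)) * Real.exp (-B⁻¹ * (Y ω : ℝ))) ∂μ
        = 1 + ENNReal.ofReal (Real.exp (-(m/B)))
            * ENNReal.ofReal (Real.exp (m * (Real.exp (-B⁻¹) - 1))) := by
      have heq : ∀ ω, ENNReal.ofReal (1 + Real.exp (-(m/B)) * Real.exp (-B⁻¹ * (Y ω : ℝ)))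
          = 1 + ENNReal.ofReal (Real.exp (-(m/B)))
              * ENNReal.ofReal (Real.exp (-B⁻¹ * (Y ω : ℝ))) := by
        intro ω
        rw [ENNReal.ofReal_add (by norm_num) (by positivity), ENNReal.ofReal_one,
          ENNReal.ofReal_mul (Real.exp_pos _).le]
      calc ∫⁻ ω, ENNReal.ofReal (1 + Real.exp (-(m/B)) * Real.exp (-B⁻¹ * (Y ω : ℝ))) ∂μ
          = ∫⁻ ω, (1 + ENNReal.ofReal (Real.exp (-(m/B)))
              * ENNReal.ofReal (Real.exp (-B⁻¹ * (Y ω : ℝ)))) ∂μ := lintegral_congr heq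
        _ = 1 + ENNReal.ofReal (Real.exp (-(m/B)))
              * ENNReal.ofReal (Real.exp (m * (Real.exp (-B⁻¹) - 1))) := by
            rw [lintegral_add_left measurable_const, lintegral_const_mul _ hmeas2, hL (-B⁻¹),
              lintegral_one, measure_univ]
    have hF : ∫⁻ ω, ENNReal.ofReal (Real.exp (-(m/B)) * Real.exp (B⁻¹ * (Y ω : ℝ))
          + Real.exp (m/B) * Real.exp (-B⁻¹ * (Y ω : ℝ))) ∂μ
        = ENNReal.ofReal (Real.exp (-(m/B)))
            * ENNReal.ofReal (Real.exp (m * (Real.exp B⁻¹ - 1)))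
          + ENNReal.ofReal (Real.exp (m/B))
            * ENNReal.ofReal (Real.exp (m * (Real.exp (-B⁻¹) - 1))) := by
      have heq : ∀ ω, ENNReal.ofReal (Real.exp (-(m/B)) * Real.exp (B⁻¹ * (Y ω : ℝ))
            + Real.exp (m/B) * Real.exp (-B⁻¹ * (Y ω : ℝ)))
          = ENNReal.ofReal (Real.exp (-(m/B))) * ENNReal.ofReal (Real.exp (B⁻¹ * (Y ω : ℝ)))
            + ENNReal.ofReal (Real.exp (m/B))
              * ENNReal.ofReal (Real.exp (-B⁻¹ * (Y ω : ℝ))) := by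
        intro ω
        rw [ENNReal.ofReal_add (by positivity) (by positivity),
          ENNReal.ofReal_mul (Real.exp_pos _).le, ENNReal.ofReal_mul (Real.exp_pos _).le]
      calc ∫⁻ ω, ENNReal.ofReal (Real.exp (-(m/B)) * Real.exp (B⁻¹ * (Y ω : ℝ))
            + Real.exp (m/B) * Real.exp (-B⁻¹ * (Y ω : ℝ))) ∂μ
          = ∫⁻ ω, (ENNReal.ofReal (Real.exp (-(m/B)))
                * ENNReal.ofReal (Real.exp (B⁻¹ * (Y ω : ℝ)))
              + ENNReal.ofReal (Real.exp (m/B))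
                * ENNReal.ofReal (Real.exp (-B⁻¹ * (Y ω : ℝ)))) ∂μ := lintegral_congr heq
        _ = _ := by
            rw [lintegral_add_left (hmeas1.const_mul _),
              lintegral_const_mul _ hmeas1, lintegral_const_mul _ hmeas2, hL B⁻¹, hL (-B⁻¹)]
    have hRle : ENNReal.ofReal (Real.exp (-(m/B)))
            * ENNReal.ofReal (Real.exp (m * (Real.exp B⁻¹ - 1)))
          + ENNReal.ofReal (Real.exp (m/B))
            * ENNReal.ofReal (Real.exp (m * (Real.exp (-B⁻¹) - 1)))
        ≤ 1 + (1 + ENNReal.ofReal (Real.exp (-(m/B)))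
            * ENNReal.ofReal (Real.exp (m * (Real.exp (-B⁻¹) - 1)))) := by
      rw [← ENNReal.ofReal_mul (Real.exp_pos _).le, ← ENNReal.ofReal_mul (Real.exp_pos _).le,
        ← ENNReal.ofReal_mul (Real.exp_pos _).le, ← Real.exp_add, ← Real.exp_add,
        ← Real.exp_add]
      have h1 : -(m/B) + m * (Real.exp B⁻¹ - 1) = m * (Real.exp B⁻¹ - 1 - B⁻¹) := by
        rw [div_eq_mul_inv]; ring
      have h2 : m/B + m * (Real.exp (-B⁻¹) - 1) = m * (Real.exp (-B⁻¹) - 1 + B⁻¹) := by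
        rw [div_eq_mul_inv]; ring
      have h3 : -(m/B) + m * (Real.exp (-B⁻¹) - 1) = m * (Real.exp (-B⁻¹) - 1 - B⁻¹) := by
        rw [div_eq_mul_inv]; ring
      rw [h1, h2, h3]
      have hsc := scalar_key hm hainv ha1 ham' hma2
      calc ENNReal.ofReal (Real.exp (m * (Real.exp B⁻¹ - 1 - B⁻¹)))
            + ENNReal.ofReal (Real.exp (m * (Real.exp (-B⁻¹) - 1 + B⁻¹)))
          = ENNReal.ofReal (Real.exp (m * (Real.exp B⁻¹ - 1 - B⁻¹))
              + Real.exp (m * (Real.exp (-B⁻¹) - 1 + B⁻¹))) :=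
            (ENNReal.ofReal_add (Real.exp_pos _).le (Real.exp_pos _).le).symm
        _ ≤ ENNReal.ofReal (2 + Real.exp (m * (Real.exp (-B⁻¹) - 1 - B⁻¹))) :=
            ENNReal.ofReal_le_ofReal hsc
        _ = 1 + (1 + ENNReal.ofReal (Real.exp (m * (Real.exp (-B⁻¹) - 1 - B⁻¹)))) := by
            rw [ENNReal.ofReal_add (by norm_num : (0:ℝ) ≤ 2) (Real.exp_pos _).le,
              ENNReal.ofReal_ofNat, ← one_add_one_eq_two, add_assoc]
    have hfin : (1 : ℝ≥0∞) + ENNReal.ofReal (Real.exp (-(m/B)))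
        * ENNReal.ofReal (Real.exp (m * (Real.exp (-B⁻¹) - 1))) ≠ ⊤ :=
      ENNReal.add_ne_top.mpr ⟨ENNReal.one_ne_top,
        ENNReal.mul_ne_top ENNReal.ofReal_ne_top ENNReal.ofReal_ne_top⟩
    rw [hG, hF] at key
    have h8 := key.trans hRle
    exact (ENNReal.add_le_add_iff_right hfin).mp h8
  · -- Bernoulli case
    intro q hq0 hq1 Y hY hmeasq
    set B : ℝ := c * (1 + q * (1 - q) / Real.log 2) with hB_def
    have hqq : 0 ≤ q * (1 - q) := mul_nonneg hq0 (by linarith)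
    have hBL : B * Real.log 2 = c * Real.log 2 + c * (q * (1 - q)) := by
      rw [hB_def]; field_simp
    clear_value B
    have hBlog : 1 ≤ B * Real.log 2 := by
      have h2 : (0.73 : ℝ) ≤ 2 / Real.exp 1 := by
        rw [le_div_iff₀ hepos]; nlinarith
      have h3 : 1 ≤ c * Real.log 2 := by rw [hcL]; linarith
      have h4 : 0 ≤ c * (q * (1 - q)) := mul_nonneg hcpos.le hqq
      rw [hBL]; linarith
    have hBpos : 0 < B := by
      by_contra hcon
      push_neg at hcon
      nlinarith
    unfold psi1Norm
    apply sInf_le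
    refine ⟨ENNReal.ofReal_pos.mpr hBpos, ENNReal.ofReal_ne_top, ?_⟩
    simp only [ENNReal.toReal_ofReal hBpos.le]
    have hpt : ∀ ω, ENNReal.ofReal
        (Real.exp (|(if Y ω then (1:ℝ) else 0) - q| / B) - 1) ≤ 1 := by
      intro ω
      have habs : |(if Y ω then (1:ℝ) else 0) - q| ≤ 1 := by
        cases h : Y ω <;> simp [h] <;> rw [abs_le] <;> constructor <;> linarith
      have harg : |(if Y ω then (1:ℝ) else 0) - q| / B ≤ Real.log 2 := by
        rw [div_le_iff₀ hBpos]
        calc |(if Y ω then (1:ℝ) else 0) - q| ≤ 1 := habs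
          _ ≤ Real.log 2 * B := by rw [mul_comm]; exact hBlog
      have hexp : Real.exp (|(if Y ω then (1:ℝ) else 0) - q| / B) ≤ 2 := by
        calc Real.exp _ ≤ Real.exp (Real.log 2) := Real.exp_le_exp.mpr harg
          _ = 2 := Real.exp_log (by norm_num)
      calc ENNReal.ofReal (Real.exp (|(if Y ω then (1:ℝ) else 0) - q| / B) - 1)
          ≤ ENNReal.ofReal 1 := ENNReal.ofReal_le_ofReal (by linarith)
        _ = 1 := ENNReal.ofReal_one
    calc ∫⁻ ω, ENNReal.ofReal
          (Real.exp (|(if Y ω then (1:ℝ) else 0) - q| / B) - 1) ∂μ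
        ≤ ∫⁻ _, 1 ∂μ := lintegral_mono hpt
      _ = 1 := by simp
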